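/- arXiv:1402.4790 — 2 statements merged into one kernel-verified Lean document; each statement's English description precedes it below -/
import Mathlib

section
/- Let D be a division ring, d a 1-dimensional subspace of D², and A ∈ M_2(D) a rank 2 (hence invertible) matrix. Then a matrix M ∈ R_d is adjacent to A if and only if M = A·P for some rank 1 idempotent P ∈ M_2(D) whose row space equals d. (In particular, the set of matrices of R_d that are adjacent to A is in bijection with D and does not contain 0.) -/
open Matrix

variable {D : Type*} [DivisionRing D]

/-- The rank of a matrix over a division ring: the dimension of its row space,
i.e. of the left `D`-subspace of `D^n` spanned by the rows. -/
noncomputable def rowRank {m n : ℕ} (A : Matrix (Fin m) (Fin n) D) : ℕ :=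
  Module.finrank D (Submodule.span D (Set.range fun i => A i))

/-- Two matrices are adjacent if their difference has rank one. -/
def Adjacent {m n : ℕ} (A B : Matrix (Fin m) (Fin n) D) : Prop :=
  rowRank (A - B) = 1

/-- `R(x)`: the set of matrices of the form `ᵗu x` for a fixed row vector `x`. -/
def Rvec {m n : ℕ} (x : Fin n → D) : Set (Matrix (Fin m) (Fin n) D) :=
  { M | ∃ u : Fin m → D, ∀ i j, M i j = u i * x j }

/-- `L(ᵗy)`: the set of matrices of the form `ᵗy v` for a fixed column vector `ᵗy`. -/
def Lvec {m n : ℕ} (y : Fin m → D) : Set (Matrix (Fin m) (Fin n) D) :=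
  { M | ∃ v : Fin n → D, ∀ i j, M i j = y i * v j }

/-- `R_d`: the matrices whose row space is contained in `d`. -/
def Rsub {m n : ℕ} (d : Submodule D (Fin n → D)) : Set (Matrix (Fin m) (Fin n) D) :=
  { M | ∀ i, M i ∈ d }

/-- `L_e`: the matrices whose column space (a right subspace, i.e. a `Dᵐᵒᵖ`-submodule)
is contained in `e`. -/
def Lsub {m n : ℕ} (e : Submodule Dᵐᵒᵖ (Fin m → D)) : Set (Matrix (Fin m) (Fin n) D) :=
  { M | ∀ j, (fun i => M i j) ∈ e }

/-- The orthogonal set of a set `e` of column vectors. -/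
def perpSet {m : ℕ} (e : Set (Fin m → D)) : Set (Fin m → D) :=
  { u | ∀ v ∈ e, ∑ i, u i * v i = 0 }

/-- The `p × q` matrix with upper-left block `B` and zeros elsewhere. -/
def pad {m n : ℕ} (p q : ℕ) (B : Matrix (Fin m) (Fin n) D) :
    Matrix (Fin p) (Fin q) D :=
  Matrix.of fun i j =>
    if hi : (i : ℕ) < m then if hj : (j : ℕ) < n then B ⟨i, hi⟩ ⟨j, hj⟩ else 0 else 0

/-- `φ` is degenerate with respect to `A`. -/
def DegenerateAt {m n p q : ℕ} (φ : Matrix (Fin m) (Fin n) D → Matrix (Fin p) (Fin q) D)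
    (A : Matrix (Fin m) (Fin n) D) : Prop :=
  ∃ x : Fin p → D, x ≠ 0 ∧ ∃ y : Fin q → D, y ≠ 0 ∧
    ∀ M : Matrix (Fin m) (Fin n) D, rowRank M ≤ 1 →
      φ (A + M) - φ A ∈ Rvec y ∪ Lvec x

/-- `φ` is degenerate: degenerate with respect to every matrix. -/
def Degenerate {m n p q : ℕ} (φ : Matrix (Fin m) (Fin n) D → Matrix (Fin p) (Fin q) D) :
    Prop :=
  ∀ A, DegenerateAt φ A

/-- A map (sending `0` to `0`) is degenerate with respect to `0` iff it maps every matrix of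
rank at most one into `R(y) ∪ L(ᵗx)` for some nonzero `y`, `x`. -/
def DegZero {m n p q : ℕ} (φ : Matrix (Fin m) (Fin n) D → Matrix (Fin p) (Fin q) D) :
    Prop :=
  ∃ x : Fin p → D, x ≠ 0 ∧ ∃ y : Fin q → D, y ≠ 0 ∧
    ∀ M : Matrix (Fin m) (Fin n) D, rowRank M ≤ 1 → φ M ∈ Rvec y ∪ Lvec x

/-- A standard adjacency preserver. -/
def Standard {m n p q : ℕ} (φ : Matrix (Fin m) (Fin n) D → Matrix (Fin p) (Fin q) D) :
    Prop :=
  (m ≤ p ∧ n ≤ q ∧ ∃ τ : D ≃+* D, ∃ T : Matrix (Fin p) (Fin p) D,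
    ∃ S : Matrix (Fin q) (Fin q) D, ∃ R : Matrix (Fin p) (Fin q) D,
    IsUnit T ∧ IsUnit S ∧ ∀ A, φ A = T * pad p q (A.map τ) * S + R) ∨
  (n ≤ p ∧ m ≤ q ∧ ∃ σ : D → D, Function.Bijective σ ∧ σ 1 = 1 ∧
    (∀ a b, σ (a + b) = σ a + σ b) ∧ (∀ a b, σ (a * b) = σ b * σ a) ∧
    ∃ T : Matrix (Fin p) (Fin p) D, ∃ S : Matrix (Fin q) (Fin q) D,
    ∃ R : Matrix (Fin p) (Fin q) D, IsUnit T ∧ IsUnit S ∧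
    ∀ A, φ A = T * pad p q (A.map σ).transpose * S + R)

/-- A division ring is EAS if every (unital) ring endomorphism of it is surjective. -/
def EAS (D : Type*) [DivisionRing D] : Prop :=
  ∀ f : D →+* D, Function.Surjective f

/-- A set of matrices is adjacent if any two distinct members are adjacent. -/
def IsAdjacentSet {m n : ℕ} (S : Set (Matrix (Fin m) (Fin n) D)) : Prop :=
  ∀ A ∈ S, ∀ B ∈ S, A ≠ B → Adjacent A B


section Aux

variable {D : Type*} [DivisionRing D]

lemma rowRank_eq_finrank_range {m n : ℕ} (M : Matrix (Fin m) (Fin n) D) :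
    rowRank M = Module.finrank D (LinearMap.range M.vecMulLinear) := by
  rw [rowRank, range_vecMulLinear]
  rfl

lemma vecMulLinear_mul {m n p : ℕ} (A : Matrix (Fin m) (Fin n) D)
    (B : Matrix (Fin n) (Fin p) D) :
    (A * B).vecMulLinear = B.vecMulLinear.comp A.vecMulLinear := by
  apply LinearMap.ext
  intro v
  show v ᵥ* (A * B) = (v ᵥ* A) ᵥ* B
  rw [Matrix.vecMul_vecMul]

lemma vecMul_ext {m n : ℕ} {A B : Matrix (Fin m) (Fin n) D}
    (h : ∀ v, v ᵥ* A = v ᵥ* B) : A = B := by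
  ext i j
  have := congr_fun (h (Pi.single i 1)) j
  simpa [Matrix.single_one_vecMul] using this

end Aux

/-- from the proof of Lemma 3.7. For a rank-2 matrix `A ∈ M₂(D)` and
a 1-dimensional subspace `d` of `D²`, a matrix `M ∈ R_d` is adjacent to `A` iff
`M = A·P` for some rank-1 idempotent `P` whose row space equals `d`. -/
theorem stmt6 (d : Submodule D (Fin 2 → D)) (hd : Module.finrank D d = 1)
    (A : Matrix (Fin 2) (Fin 2) D) (hA : rowRank A = 2)
    (M : Matrix (Fin 2) (Fin 2) D) (hM : M ∈ Rsub d) :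
    Adjacent M A ↔
      ∃ P : Matrix (Fin 2) (Fin 2) D, P * P = P ∧ rowRank P = 1 ∧
        Submodule.span D (Set.range fun i => P i) = d ∧ M = A * P := by
  classical
  -- A is invertible: obtain a two-sided inverse B
  have hfull : LinearMap.range A.vecMulLinear = ⊤ := by
    apply Submodule.eq_top_of_finrank_eq
    rw [← rowRank_eq_finrank_range, hA, Module.finrank_fin_fun]
  have hsurj : Function.Surjective A.vecMul := by
    rw [← Matrix.coe_vecMulLinear, ← LinearMap.range_eq_top]
    exact hfull
  obtain ⟨B, hBA⟩ := Matrix.vecMul_surjective_iff_exists_left_inverse.mp hsurj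
  have hBinj : Function.Injective B.vecMulLinear := by
    intro u v huv
    have : (u ᵥ* B) ᵥ* A = (v ᵥ* B) ᵥ* A := by
      simpa [Matrix.vecMulLinear_apply] using congrArg (· ᵥ* A) huv
    simpa [Matrix.vecMul_vecMul, hBA] using this
  have hBsurj : Function.Surjective B.vecMulLinear :=
    LinearMap.surjective_of_injective hBinj
  obtain ⟨C, hCB⟩ := Matrix.vecMul_surjective_iff_exists_left_inverse.mp hBsurj
  have hAB : A * B = 1 := by
    have hCA : C = A := by
      calc C = C * (B * A) := by rw [hBA, mul_one]
        _ = (C * B) * A := by rw [mul_assoc]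
        _ = A := by rw [hCB, one_mul]
    rw [← hCA, hCB]
  -- multiplication by A on the left preserves rowRank
  have hAsurjL : Function.Surjective A.vecMulLinear := by
    rw [← LinearMap.range_eq_top]; exact hfull
  have rankmul : ∀ N : Matrix (Fin 2) (Fin 2) D, rowRank (A * N) = rowRank N := by
    intro N
    rw [rowRank_eq_finrank_range, rowRank_eq_finrank_range, vecMulLinear_mul,
      LinearMap.range_comp_of_range_eq_top _ hfull]
  constructor
  · -- forward direction
    intro hadj
    obtain ⟨P, hMAP⟩ : ∃ P, M = A * P :=
      ⟨B * M, by rw [← mul_assoc, hAB, one_mul]⟩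
    -- row space of M is ≤ d
    have hMd : LinearMap.range M.vecMulLinear ≤ d := by
      rw [range_vecMulLinear]
      rw [Submodule.span_le]
      rintro x ⟨i, rfl⟩
      exact hM i
    have hrangeP : LinearMap.range P.vecMulLinear = LinearMap.range M.vecMulLinear := by
      conv_rhs => rw [hMAP, vecMulLinear_mul]
      rw [LinearMap.range_comp_of_range_eq_top _ hfull]
    have hPd : LinearMap.range P.vecMulLinear ≤ d := hrangeP ▸ hMd
    -- rank of P - 1 is 1
    have hMA : M - A = A * (P - 1) := by rw [mul_sub, ← hMAP, mul_one]
    have hP1 : rowRank (P - 1) = 1 := by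
      have := rankmul (P - 1)
      rw [← hMA] at this
      rw [← this]; exact hadj
    -- rank-nullity: ker of (P-1).vecMulLinear has finrank 1
    set g := (P - 1).vecMulLinear with hgdef
    have hrn : Module.finrank D (LinearMap.range g) + Module.finrank D (LinearMap.ker g) = 2 := by
      have := LinearMap.finrank_range_add_finrank_ker g
      rwa [Module.finrank_fin_fun] at this
    have hrg : Module.finrank D (LinearMap.range g) = 1 := by
      rw [← rowRank_eq_finrank_range, hP1]
    have hkg : Module.finrank D (LinearMap.ker g) = 1 := by omega
    -- ker g ≤ range of P.vecMulLinear
    have hker_le : LinearMap.ker g ≤ LinearMap.range P.vecMulLinear := by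
      intro v hv
      have hv' : v ᵥ* (P - 1) = 0 := hv
      have hvP : v ᵥ* P = v := by
        have := hv'
        rw [Matrix.vecMul_sub, sub_eq_zero, Matrix.vecMul_one] at this
        exact this
      exact ⟨v, hvP⟩
    -- finrank of range of P.vecMulLinear ≤ 1
    have hrP_le : Module.finrank D (LinearMap.range P.vecMulLinear) ≤ 1 := by
      calc Module.finrank D (LinearMap.range P.vecMulLinear)
          ≤ Module.finrank D d := Submodule.finrank_mono hPd
        _ = 1 := hd
    have hker_eq : LinearMap.ker g = LinearMap.range P.vecMulLinear := by
      apply Submodule.eq_of_le_of_finrank_le hker_le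
      rw [hkg]; exact hrP_le
    -- P is idempotent
    have hfix : ∀ v, (v ᵥ* P) ᵥ* P = v ᵥ* P := by
      intro v
      have hmem : v ᵥ* P ∈ LinearMap.ker g := by
        rw [hker_eq]; exact ⟨v, rfl⟩
      have : (v ᵥ* P) ᵥ* (P - 1) = 0 := hmem
      rw [Matrix.vecMul_sub, sub_eq_zero, Matrix.vecMul_one] at this
      exact this
    have hPP : P * P = P := by
      apply vecMul_ext
      intro v
      rw [← Matrix.vecMul_vecMul]
      exact hfix v
    have hrankP : rowRank P = 1 := by
      rw [rowRank_eq_finrank_range, ← hker_eq, hkg]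
    have hspanP : Submodule.span D (Set.range fun i => P i) = d := by
      have h1 : Submodule.span D (Set.range fun i => P i) = LinearMap.range P.vecMulLinear :=
        (range_vecMulLinear P).symm
      rw [h1]
      apply Submodule.eq_of_le_of_finrank_le hPd
      rw [hd, ← hker_eq, hkg]
    exact ⟨P, hPP, hrankP, hspanP, hMAP⟩
  · -- reverse direction
    rintro ⟨P, hPP, hrankP, hspanP, rfl⟩
    show rowRank (A * P - A) = 1
    have hMA : A * P - A = A * (P - 1) := by rw [mul_sub, mul_one]
    rw [hMA, rankmul]
    -- ker of (P-1).vecMulLinear = range of P.vecMulLinear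
    set g := (P - 1).vecMulLinear with hgdef
    have hker_eq : LinearMap.ker g = LinearMap.range P.vecMulLinear := by
      apply le_antisymm
      · intro v hv
        have hv' : v ᵥ* (P - 1) = 0 := hv
        rw [Matrix.vecMul_sub, sub_eq_zero, Matrix.vecMul_one] at hv'
        exact ⟨v, hv'⟩
      · rintro _ ⟨v, rfl⟩
        show (v ᵥ* P) ᵥ* (P - 1) = 0
        rw [Matrix.vecMul_sub, sub_eq_zero, Matrix.vecMul_one, Matrix.vecMul_vecMul, hPP]
    have hrn : Module.finrank D (LinearMap.range g) + Module.finrank D (LinearMap.ker g) = 2 := by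
      have := LinearMap.finrank_range_add_finrank_ker g
      rwa [Module.finrank_fin_fun] at this
    have hkg : Module.finrank D (LinearMap.ker g) = 1 := by
      rw [hker_eq, ← rowRank_eq_finrank_range, hrankP]
    have : rowRank (P - 1) = Module.finrank D (LinearMap.range g) :=
      rowRank_eq_finrank_range _
    omega
end

section
/- Let D be a division ring, m, n, p, q be positive integers, and φ : M_{m×n}(D) → M_{p×q}(D) be an adjacency preserver with φ(0) = 0. Let d be a 1-dimensional subspace of D^n and e a 1-dimensional subspace of ᵗD^m. If there exists a 1-dimensional subspace d' of D^q such that φ(R_d) ⊆ R_{d'} and φ(L_e) ⊆ R_{d'}, or there exists a 1-dimensional subspace e' of ᵗD^p such that φ(R_d) ⊆ L_{e'} and φ(L_e) ⊆ L_{e'}, then φ is degenerate with respect to 0, i.e. there exist a nonzero column vector ᵗx ∈ ᵗD^p and a nonzero row vector y ∈ D^q such that φ maps every matrix of rank at most 1 into R(y) ∪ L(ᵗx). -/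
open Matrix

variable {D : Type*} [DivisionRing D]

lemma solve_left' {α β zj yj : D} (hα : α ≠ 0) (h : α * zj = β * yj) :
    zj = (α⁻¹ * β) * yj := by
  rw [mul_assoc, ← h, ← mul_assoc, inv_mul_cancel₀ hα, one_mul]

lemma solve_right' {α β zi xi : D} (hα : α ≠ 0) (h : zi * α = xi * β) :
    zi = xi * (β * α⁻¹) := by
  rw [← mul_assoc, ← h, mul_assoc, mul_inv_cancel₀ hα, mul_one]

lemma rowRank_zero' {m n : ℕ} {M : Matrix (Fin m) (Fin n) D} (h : ∀ i j, M i j = 0) :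
    rowRank M = 0 := by
  unfold rowRank
  have hs : Submodule.span D (Set.range fun i => M i) = ⊥ := by
    rw [Submodule.span_eq_bot]
    rintro x ⟨i, rfl⟩
    exact funext fun j => h i j
  rw [hs, finrank_bot]

lemma exists_decomp_of_le_one {m n : ℕ} {M : Matrix (Fin m) (Fin n) D}
    (h : rowRank M ≤ 1) : ∃ u : Fin m → D, ∃ v : Fin n → D, ∀ i j, M i j = u i * v j := by
  classical
  unfold rowRank at h
  set S := Submodule.span D (Set.range fun i => M i) with hS
  haveI : FiniteDimensional D S := FiniteDimensional.span_of_finite D (Set.finite_range _)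
  obtain ⟨v, hv⟩ := (finrank_le_one_iff (K := D) (V := S)).mp h
  have hmem : ∀ i, M i ∈ S := fun i => Submodule.subset_span ⟨i, rfl⟩
  choose u hu using fun i => hv ⟨M i, hmem i⟩
  refine ⟨u, fun j => (v : Fin n → D) j, fun i j => ?_⟩
  have h1 : u i • (v : Fin n → D) = M i := congrArg Subtype.val (hu i)
  have := congrFun h1 j
  simpa using this.symm

lemma rowRank_outer {m n : ℕ} {u : Fin m → D} {v : Fin n → D} (hu : u ≠ 0) (hv : v ≠ 0)
    {M : Matrix (Fin m) (Fin n) D} (h : ∀ i j, M i j = u i * v j) : rowRank M = 1 := by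
  unfold rowRank
  have hrow : ∀ i, M i = u i • v := fun i => funext fun j => h i j
  obtain ⟨i₀, hi₀⟩ := Function.ne_iff.mp hu
  have hi₀ : u i₀ ≠ 0 := by simpa using hi₀
  have hspan : Submodule.span D (Set.range fun i => M i) = Submodule.span D {v} := by
    apply le_antisymm
    · rw [Submodule.span_le]
      rintro x ⟨i, rfl⟩
      have : M i ∈ Submodule.span D {v} := by
        rw [hrow i]
        exact Submodule.smul_mem _ _ (Submodule.mem_span_singleton_self v)
      exact this
    · rw [Submodule.span_le, Set.singleton_subset_iff]
      have h1 : M i₀ ∈ Submodule.span D (Set.range fun i => M i) :=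
        Submodule.subset_span ⟨i₀, rfl⟩
      have h2 : (u i₀)⁻¹ • M i₀ ∈ Submodule.span D (Set.range fun i => M i) :=
        Submodule.smul_mem _ _ h1
      have h3 : (u i₀)⁻¹ • M i₀ = v := by
        rw [hrow i₀, smul_smul, inv_mul_cancel₀ hi₀, one_smul]
      rwa [h3] at h2
  rw [hspan]
  exact finrank_span_singleton hv

lemma decomp_nonzero {m n : ℕ} {M : Matrix (Fin m) (Fin n) D} {u : Fin m → D} {v : Fin n → D}
    (h : ∀ i j, M i j = u i * v j) (hr : rowRank M = 1) : u ≠ 0 ∧ v ≠ 0 := by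
  constructor
  · intro hu
    have : rowRank M = 0 := rowRank_zero' fun i j => by
      rw [h i j, congrFun hu i]; simp
    omega
  · intro hv
    have : rowRank M = 0 := rowRank_zero' fun i j => by
      rw [h i j, congrFun hv j]; simp
    omega

lemma exists_decomp_of_eq_one {m n : ℕ} {M : Matrix (Fin m) (Fin n) D}
    (h : rowRank M = 1) :
    ∃ u : Fin m → D, ∃ v : Fin n → D, u ≠ 0 ∧ v ≠ 0 ∧ ∀ i j, M i j = u i * v j := by
  obtain ⟨u, v, huv⟩ := exists_decomp_of_le_one h.le
  obtain ⟨hu, hv⟩ := decomp_nonzero huv h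
  exact ⟨u, v, hu, hv, huv⟩

/-- Two-term lemma, "right" version. -/
lemma coeff_right {m n : ℕ} {M : Matrix (Fin m) (Fin n) D} {a b : Fin m → D} {z y : Fin n → D}
    (hM : ∀ i j, M i j = a i * z j + b i * y j) (ha : a ≠ 0) (hy : y ≠ 0)
    (hzy : ∀ c : D, z ≠ fun j => c * y j) (hr : rowRank M ≤ 1) :
    ∃ t : D, ∀ i, b i = a i * t := by
  obtain ⟨c, w, hcw⟩ := exists_decomp_of_le_one hr
  have hcw' : ∀ i j, a i * z j + b i * y j = c i * w j := fun i j => (hM i j).symm.trans (hcw i j)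
  obtain ⟨i₀, hi₀⟩ := Function.ne_iff.mp ha
  have hi₀ : a i₀ ≠ 0 := by simpa using hi₀
  have hc₀ : c i₀ ≠ 0 := by
    intro h0
    apply hzy ((a i₀)⁻¹ * (-b i₀))
    funext j
    have h1 := hcw' i₀ j
    rw [h0, zero_mul] at h1
    have h2 : a i₀ * z j = (-b i₀) * y j := by
      rw [neg_mul]; exact eq_neg_of_add_eq_zero_left h1
    exact solve_left' hi₀ h2
  have key : ∀ i, a i = (c i * (c i₀)⁻¹) * a i₀ ∧ b i = (c i * (c i₀)⁻¹) * b i₀ := by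
    intro i
    have hw : ∀ j, w j = (c i₀)⁻¹ * (a i₀ * z j + b i₀ * y j) := by
      intro j
      rw [hcw' i₀ j, ← mul_assoc, inv_mul_cancel₀ hc₀, one_mul]
    have hmain : ∀ j, (a i - c i * (c i₀)⁻¹ * a i₀) * z j
        = (c i * (c i₀)⁻¹ * b i₀ - b i) * y j := by
      intro j
      have h1 := hcw' i j
      rw [hw j] at h1
      have h2 : c i * ((c i₀)⁻¹ * (a i₀ * z j + b i₀ * y j)) =
          c i * (c i₀)⁻¹ * a i₀ * z j + c i * (c i₀)⁻¹ * b i₀ * y j := by noncomm_ring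
      rw [h2] at h1
      linear_combination (norm := noncomm_ring) h1
    have hα : a i - c i * (c i₀)⁻¹ * a i₀ = 0 := by
      by_contra hα
      exact hzy _ (funext fun j => solve_left' hα (hmain j))
    obtain ⟨j₀, hj₀⟩ := Function.ne_iff.mp hy
    have hj₀ : y j₀ ≠ 0 := by simpa using hj₀
    have hβ : c i * (c i₀)⁻¹ * b i₀ - b i = 0 := by
      have h3 := hmain j₀
      rw [hα, zero_mul] at h3
      rcases mul_eq_zero.mp h3.symm with h' | h'
      · exact h'
      · exact absurd h' hj₀
    exact ⟨(sub_eq_zero.mp hα), (sub_eq_zero.mp hβ).symm⟩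
  refine ⟨(a i₀)⁻¹ * b i₀, fun i => ?_⟩
  obtain ⟨h1, h2⟩ := key i
  have hk : c i * (c i₀)⁻¹ = a i * (a i₀)⁻¹ := by
    rw [h1, mul_assoc, mul_inv_cancel₀ hi₀, mul_one]
  rw [h2, hk, mul_assoc]

/-- Two-term lemma, "left" version. -/
lemma coeff_left {m n : ℕ} {M : Matrix (Fin m) (Fin n) D} {a x : Fin m → D} {z v : Fin n → D}
    (hM : ∀ i j, M i j = a i * z j + x i * v j) (hz : z ≠ 0) (hx : x ≠ 0)
    (hax : ∀ c : D, a ≠ fun i => x i * c) (hr : rowRank M ≤ 1) :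
    ∃ t : D, ∀ j, v j = t * z j := by
  obtain ⟨c, w, hcw⟩ := exists_decomp_of_le_one hr
  have hcw' : ∀ i j, a i * z j + x i * v j = c i * w j := fun i j => (hM i j).symm.trans (hcw i j)
  obtain ⟨j₀, hj₀⟩ := Function.ne_iff.mp hz
  have hj₀ : z j₀ ≠ 0 := by simpa using hj₀
  have hw₀ : w j₀ ≠ 0 := by
    intro h0
    apply hax (-(v j₀) * (z j₀)⁻¹)
    funext i
    have h1 := hcw' i j₀
    rw [h0, mul_zero] at h1
    have h2 : a i * z j₀ = x i * (-(v j₀)) := by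
      rw [mul_neg]
      exact eq_neg_of_add_eq_zero_left h1
    exact solve_right' hj₀ h2
  have key : ∀ j, z j = z j₀ * ((w j₀)⁻¹ * w j) ∧ v j = v j₀ * ((w j₀)⁻¹ * w j) := by
    intro j
    have hc : ∀ i, c i = (a i * z j₀ + x i * v j₀) * (w j₀)⁻¹ := by
      intro i
      rw [hcw' i j₀, mul_assoc, mul_inv_cancel₀ hw₀, mul_one]
    have hmain : ∀ i, a i * (z j - z j₀ * ((w j₀)⁻¹ * w j))
        = x i * (v j₀ * ((w j₀)⁻¹ * w j) - v j) := by
      intro i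
      have h1 := hcw' i j
      rw [hc i] at h1
      have h2 : (a i * z j₀ + x i * v j₀) * (w j₀)⁻¹ * w j =
          a i * (z j₀ * ((w j₀)⁻¹ * w j)) + x i * (v j₀ * ((w j₀)⁻¹ * w j)) := by noncomm_ring
      rw [h2] at h1
      linear_combination (norm := noncomm_ring) h1
    have hα : z j - z j₀ * ((w j₀)⁻¹ * w j) = 0 := by
      by_contra hα
      exact hax _ (funext fun i => solve_right' hα (hmain i))
    obtain ⟨i₀, hi₀⟩ := Function.ne_iff.mp hx
    have hi₀ : x i₀ ≠ 0 := by simpa using hi₀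
    have hβ : v j₀ * ((w j₀)⁻¹ * w j) - v j = 0 := by
      have h3 := hmain i₀
      rw [hα, mul_zero] at h3
      rcases mul_eq_zero.mp h3.symm with h' | h'
      · exact absurd h' hi₀
      · exact h'
    exact ⟨sub_eq_zero.mp hα, (sub_eq_zero.mp hβ).symm⟩
  refine ⟨v j₀ * (z j₀)⁻¹, fun j => ?_⟩
  obtain ⟨h1, h2⟩ := key j
  have hs : (w j₀)⁻¹ * w j = (z j₀)⁻¹ * z j := by
    rw [h1, ← mul_assoc, inv_mul_cancel₀ hj₀, one_mul]
  rw [h2, hs, ← mul_assoc]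

section Stmt7Aux

lemma gen_of_finrank_one {R V : Type*} [DivisionRing R] [AddCommGroup V] [Module R V]
    (d : Submodule R V) (hd : Module.finrank R d = 1) :
    ∃ v : V, v ≠ 0 ∧ v ∈ d ∧ ∀ u ∈ d, ∃ c : R, u = c • v := by
  obtain ⟨v, hv0, hv⟩ := finrank_eq_one_iff'.mp hd
  refine ⟨v.1, by simpa using hv0, v.2, fun u hu => ?_⟩
  obtain ⟨c, hc⟩ := hv ⟨u, hu⟩
  exact ⟨c, (congrArg Subtype.val hc).symm⟩

variable {m n p q : ℕ}

lemma adjHelper {A G : Matrix (Fin m) (Fin n) D} {r : Fin m → D} {s : Fin n → D}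
    (hr : r ≠ 0) (hs : s ≠ 0) (h : ∀ i j, A i j - G i j = r i * s j) : Adjacent A G := by
  unfold Adjacent
  exact rowRank_outer hr hs (fun i j => by rw [Matrix.sub_apply]; exact h i j)

lemma sub_fun_ne_zero {κ : Type*} {u u' : κ → D} (h : u ≠ u') :
    (fun i => u i - u' i) ≠ 0 := by
  intro h'
  exact h (funext fun i => sub_eq_zero.mp (congrFun h' i))

lemma caseR (φ : Matrix (Fin m) (Fin n) D → Matrix (Fin p) (Fin q) D)
    (hφ : ∀ A B, Adjacent A B → Adjacent (φ A) (φ B)) (h0 : φ 0 = 0)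
    (d : Submodule D (Fin n → D)) (e : Submodule Dᵐᵒᵖ (Fin m → D))
    (x₀ : Fin n → D) (hx₀0 : x₀ ≠ 0) (hx₀d : x₀ ∈ d)
    (w : Fin m → D) (hw0 : w ≠ 0) (hwe : w ∈ e)
    (y : Fin q → D) (hy : y ≠ 0) (hp : 0 < p)
    (hRd : ∀ M, M ∈ Rsub d → φ M ∈ Rvec y)
    (hLe : ∀ M, M ∈ Lsub e → φ M ∈ Rvec y) :
    DegZero φ := by
  classical
  have himg : ∀ A : Matrix (Fin m) (Fin n) D, rowRank A = 1 → rowRank (φ A) = 1 := by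
    intro A hA
    have h1 : Adjacent A 0 := by unfold Adjacent; rwa [sub_zero]
    have h2 := hφ A 0 h1
    unfold Adjacent at h2
    rwa [h0, sub_zero] at h2
  -- membership helpers
  have memR : ∀ (A : Matrix (Fin m) (Fin n) D) (u : Fin m → D) (v : Fin n → D), v ∈ d →
      (∀ i j, A i j = u i * v j) → A ∈ Rsub d := by
    intro A u v hv hA
    simp only [Rsub, Set.mem_setOf_eq]
    intro i
    have hAi : A i = u i • v := funext fun j => hA i j
    rw [hAi]
    exact d.smul_mem _ hv
  have memL : ∀ (A : Matrix (Fin m) (Fin n) D) (u : Fin m → D) (v : Fin n → D) (c : D),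
      (u = fun i => w i * c) → (∀ i j, A i j = u i * v j) → A ∈ Lsub e := by
    intro A u v c hc hA
    simp only [Lsub, Set.mem_setOf_eq]
    intro j
    have hcol : (fun i => A i j) = (MulOpposite.op (c * v j)) • w := by
      funext i
      rw [hA i j, hc]
      simp only [Pi.smul_apply, MulOpposite.smul_eq_mul_unop, MulOpposite.unop_op]
      rw [mul_assoc]
    rw [hcol]
    exact e.smul_mem _ hwe
  -- extraction of data for a "bad" matrix
  have extract : ∀ A : Matrix (Fin m) (Fin n) D, rowRank A = 1 → φ A ∉ Rvec y →
      ∃ (u : Fin m → D) (v : Fin n → D) (a : Fin p → D) (z : Fin q → D),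
        (∀ i j, A i j = u i * v j) ∧ u ≠ 0 ∧ v ≠ 0 ∧ v ∉ d ∧
        (∀ c : D, u ≠ fun i => w i * c) ∧
        (∀ i j, φ A i j = a i * z j) ∧ a ≠ 0 ∧ z ≠ 0 ∧ (∀ c : D, z ≠ fun j => c * y j) := by
    intro A hA hbad
    obtain ⟨u, v, hu, hv, hAd⟩ := exists_decomp_of_eq_one hA
    obtain ⟨a, z, ha, hz, hφAd⟩ := exists_decomp_of_eq_one (himg A hA)
    refine ⟨u, v, a, z, hAd, hu, hv, ?_, ?_, hφAd, ha, hz, ?_⟩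
    · intro hvd
      exact hbad (hRd A (memR A u v hvd hAd))
    · intro c hc
      exact hbad (hLe A (memL A u v c hc hAd))
    · intro c hc
      apply hbad
      refine ⟨fun i => a i * c, fun i j => ?_⟩
      rw [hφAd i j, congrFun hc j, ← mul_assoc]
  -- decomposition of the image of a good rank one matrix
  have gooddec : ∀ G : Matrix (Fin m) (Fin n) D, rowRank G = 1 → φ G ∈ Rvec y →
      ∃ g : Fin p → D, g ≠ 0 ∧ ∀ i j, φ G i j = g i * y j := by
    intro G hG hgood
    obtain ⟨g, hg⟩ := hgood
    exact ⟨g, (decomp_nonzero hg (himg G hG)).1, hg⟩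
  -- the link lemma
  have link : ∀ (A G : Matrix (Fin m) (Fin n) D) (a : Fin p → D) (z : Fin q → D)
      (g : Fin p → D),
      (∀ i j, φ A i j = a i * z j) → a ≠ 0 → (∀ c : D, z ≠ fun j => c * y j) →
      (∀ i j, φ G i j = g i * y j) → g ≠ 0 → Adjacent A G →
      ∃ t, t ≠ 0 ∧ ∀ i, g i = a i * t := by
    intro A G a z g hφA ha hzy hφG hg hadj
    have hr : rowRank (φ A - φ G) ≤ 1 := le_of_eq (hφ A G hadj)
    have hM : ∀ i j, (φ A - φ G) i j = a i * z j + (fun i => -(g i)) i * y j := by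
      intro i j
      rw [Matrix.sub_apply, hφA i j, hφG i j]
      simp [neg_mul, sub_eq_add_neg]
    obtain ⟨t, ht⟩ := coeff_right hM ha hy hzy hr
    have hgt : ∀ i, g i = a i * (-t) := by
      intro i
      have h1 := ht i
      rw [mul_neg, ← h1, neg_neg]
    refine ⟨-t, ?_, hgt⟩
    intro h0t
    apply hg
    funext i
    rw [Pi.zero_apply, hgt i, h0t, mul_zero]
  -- two bad matrices sharing a good rank one neighbour
  have viaGood : ∀ (A₁ A₂ G : Matrix (Fin m) (Fin n) D) (a₁ : Fin p → D) (z₁ : Fin q → D)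
      (a₂ : Fin p → D) (z₂ : Fin q → D),
      (∀ i j, φ A₁ i j = a₁ i * z₁ j) → a₁ ≠ 0 → (∀ c : D, z₁ ≠ fun j => c * y j) →
      (∀ i j, φ A₂ i j = a₂ i * z₂ j) → a₂ ≠ 0 → (∀ c : D, z₂ ≠ fun j => c * y j) →
      rowRank G = 1 → φ G ∈ Rvec y → Adjacent A₁ G → Adjacent A₂ G →
      ∃ t, ∀ i, a₂ i = a₁ i * t := by
    intro A₁ A₂ G a₁ z₁ a₂ z₂ hφ₁ ha₁ hz₁ hφ₂ ha₂ hz₂ hG1 hGg adj₁ adj₂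
    obtain ⟨g, hg, hφG⟩ := gooddec G hG1 hGg
    obtain ⟨t₁, ht₁0, ht₁⟩ := link A₁ G a₁ z₁ g hφ₁ ha₁ hz₁ hφG hg adj₁
    obtain ⟨t₂, ht₂0, ht₂⟩ := link A₂ G a₂ z₂ g hφ₂ ha₂ hz₂ hφG hg adj₂
    refine ⟨t₁ * t₂⁻¹, fun i => ?_⟩
    have h1 : a₂ i = g i * t₂⁻¹ := by
      rw [ht₂ i, mul_assoc, mul_inv_cancel₀ ht₂0, mul_one]
    rw [h1, ht₁ i, mul_assoc]
  -- the core comparison of two bad matrices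
  have core : ∀ (A₁ A₂ : Matrix (Fin m) (Fin n) D)
      (u₁ : Fin m → D) (v₁ : Fin n → D) (a₁ : Fin p → D) (z₁ : Fin q → D)
      (u₂ : Fin m → D) (v₂ : Fin n → D) (a₂ : Fin p → D) (z₂ : Fin q → D),
      (∀ i j, A₁ i j = u₁ i * v₁ j) → u₁ ≠ 0 → v₁ ≠ 0 → v₁ ∉ d →
      (∀ c : D, u₁ ≠ fun i => w i * c) →
      (∀ i j, φ A₁ i j = a₁ i * z₁ j) → a₁ ≠ 0 → (∀ c : D, z₁ ≠ fun j => c * y j) →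
      (∀ i j, A₂ i j = u₂ i * v₂ j) → u₂ ≠ 0 → v₂ ≠ 0 → v₂ ∉ d →
      (∀ c : D, u₂ ≠ fun i => w i * c) →
      (∀ i j, φ A₂ i j = a₂ i * z₂ j) → a₂ ≠ 0 → (∀ c : D, z₂ ≠ fun j => c * y j) →
      ∃ t, ∀ i, a₂ i = a₁ i * t := by
    intro A₁ A₂ u₁ v₁ a₁ z₁ u₂ v₂ a₂ z₂ hA₁ hu₁ hv₁ hvd₁ huw₁ hφ₁ ha₁ hzy₁
      hA₂ hu₂ hv₂ hvd₂ huw₂ hφ₂ ha₂ hzy₂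
    have hwv : ∀ (u' : Fin m → D), u' ≠ 0 → (∀ c : D, u' ≠ fun i => w i * c) →
        (fun i => u' i - w i) ≠ 0 := by
      intro u' _ hu'w
      apply sub_fun_ne_zero
      intro h'
      exact hu'w 1 (by rw [h']; funext i; rw [mul_one])
    have hvx : ∀ (v' : Fin n → D), v' ∉ d → (fun j => v' j - x₀ j) ≠ 0 := by
      intro v' hv'd
      apply sub_fun_ne_zero
      intro h'
      rw [h'] at hv'd
      exact hv'd hx₀d
    by_cases hv : v₁ = v₂
    · -- common neighbour in L_e : G = w ⊗ v₁
      set G : Matrix (Fin m) (Fin n) D := Matrix.of fun i j => w i * v₁ j with hGdef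
      have hGe : ∀ i j, G i j = w i * v₁ j := fun i j => rfl
      have hG1 : rowRank G = 1 := rowRank_outer hw0 hv₁ hGe
      have hGg : φ G ∈ Rvec y :=
        hLe G (memL G w v₁ 1 (funext fun i => (mul_one _).symm) hGe)
      have adj₁ : Adjacent A₁ G := by
        refine adjHelper (hwv u₁ hu₁ huw₁) hv₁ (fun i j => ?_)
        rw [hA₁ i j, hGe i j, sub_mul]
      have adj₂ : Adjacent A₂ G := by
        refine adjHelper (hwv u₂ hu₂ huw₂) hv₂ (fun i j => ?_)
        rw [hA₂ i j, hGe i j, hv, sub_mul]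
      exact viaGood A₁ A₂ G a₁ z₁ a₂ z₂ hφ₁ ha₁ hzy₁ hφ₂ ha₂ hzy₂ hG1 hGg adj₁ adj₂
    · by_cases hu : u₁ = u₂
      · -- common neighbour in R_d : G = u₁ ⊗ x₀
        set G : Matrix (Fin m) (Fin n) D := Matrix.of fun i j => u₁ i * x₀ j with hGdef
        have hGe : ∀ i j, G i j = u₁ i * x₀ j := fun i j => rfl
        have hG1 : rowRank G = 1 := rowRank_outer hu₁ hx₀0 hGe
        have hGg : φ G ∈ Rvec y := hRd G (memR G u₁ x₀ hx₀d hGe)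
        have adj₁ : Adjacent A₁ G := by
          refine adjHelper hu₁ (hvx v₁ hvd₁) (fun i j => ?_)
          rw [hA₁ i j, hGe i j, mul_sub]
        have adj₂ : Adjacent A₂ G := by
          refine adjHelper hu₂ (hvx v₂ hvd₂) (fun i j => ?_)
          rw [hA₂ i j, hGe i j, ← hu, mul_sub]
        exact viaGood A₁ A₂ G a₁ z₁ a₂ z₂ hφ₁ ha₁ hzy₁ hφ₂ ha₂ hzy₂ hG1 hGg adj₁ adj₂
      · -- the intermediate matrix A₃ = u₁ ⊗ v₂
        set A₃ : Matrix (Fin m) (Fin n) D := Matrix.of fun i j => u₁ i * v₂ j with hA₃def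
        have hA₃e : ∀ i j, A₃ i j = u₁ i * v₂ j := fun i j => rfl
        have hA₃r : rowRank A₃ = 1 := rowRank_outer hu₁ hv₂ hA₃e
        have adj₁₃ : Adjacent A₁ A₃ := by
          refine adjHelper hu₁ (sub_fun_ne_zero hv) (fun i j => ?_)
          rw [hA₁ i j, hA₃e i j, mul_sub]
        have adj₂₃ : Adjacent A₂ A₃ := by
          refine adjHelper (sub_fun_ne_zero (Ne.symm hu)) hv₂ (fun i j => ?_)
          rw [hA₂ i j, hA₃e i j, sub_mul]
        by_cases h3 : φ A₃ ∈ Rvec y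
        · exact viaGood A₁ A₂ A₃ a₁ z₁ a₂ z₂ hφ₁ ha₁ hzy₁ hφ₂ ha₂ hzy₂ hA₃r h3 adj₁₃ adj₂₃
        · -- A₃ is bad as well
          obtain ⟨a₃, z₃, ha₃, hz₃, hφ₃⟩ := exists_decomp_of_eq_one (himg A₃ hA₃r)
          have hzy₃ : ∀ c : D, z₃ ≠ fun j => c * y j := by
            intro c hc
            apply h3
            refine ⟨fun i => a₃ i * c, fun i j => ?_⟩
            rw [hφ₃ i j, congrFun hc j, ← mul_assoc]
          -- first bridge : B₁ = u₁ ⊗ x₀ , neighbour of A₁ and A₃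
          set B₁ : Matrix (Fin m) (Fin n) D := Matrix.of fun i j => u₁ i * x₀ j with hB₁def
          have hB₁e : ∀ i j, B₁ i j = u₁ i * x₀ j := fun i j => rfl
          have hB₁r : rowRank B₁ = 1 := rowRank_outer hu₁ hx₀0 hB₁e
          have hB₁g : φ B₁ ∈ Rvec y := hRd B₁ (memR B₁ u₁ x₀ hx₀d hB₁e)
          have adjB₁ : Adjacent A₁ B₁ := by
            refine adjHelper hu₁ (hvx v₁ hvd₁) (fun i j => ?_)
            rw [hA₁ i j, hB₁e i j, mul_sub]
          have adjB₃ : Adjacent A₃ B₁ := by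
            refine adjHelper hu₁ (hvx v₂ hvd₂) (fun i j => ?_)
            rw [hA₃e i j, hB₁e i j, mul_sub]
          obtain ⟨t₁, ht₁⟩ := viaGood A₁ A₃ B₁ a₁ z₁ a₃ z₃ hφ₁ ha₁ hzy₁ hφ₃ ha₃ hzy₃
            hB₁r hB₁g adjB₁ adjB₃
          -- second bridge : C₂ = w ⊗ v₂ , neighbour of A₃ and A₂
          set C₂ : Matrix (Fin m) (Fin n) D := Matrix.of fun i j => w i * v₂ j with hC₂def
          have hC₂e : ∀ i j, C₂ i j = w i * v₂ j := fun i j => rfl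
          have hC₂r : rowRank C₂ = 1 := rowRank_outer hw0 hv₂ hC₂e
          have hC₂g : φ C₂ ∈ Rvec y :=
            hLe C₂ (memL C₂ w v₂ 1 (funext fun i => (mul_one _).symm) hC₂e)
          have adjC₃ : Adjacent A₃ C₂ := by
            refine adjHelper (hwv u₁ hu₁ huw₁) hv₂ (fun i j => ?_)
            rw [hA₃e i j, hC₂e i j, sub_mul]
          have adjC₂ : Adjacent A₂ C₂ := by
            refine adjHelper (hwv u₂ hu₂ huw₂) hv₂ (fun i j => ?_)
            rw [hA₂ i j, hC₂e i j, sub_mul]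
          obtain ⟨t₂, ht₂⟩ := viaGood A₃ A₂ C₂ a₃ z₃ a₂ z₂ hφ₃ ha₃ hzy₃ hφ₂ ha₂ hzy₂
            hC₂r hC₂g adjC₃ adjC₂
          refine ⟨t₁ * t₂, fun i => ?_⟩
          rw [ht₂ i, ht₁ i, mul_assoc]
  -- final assembly
  by_cases hbad : ∃ A : Matrix (Fin m) (Fin n) D, rowRank A = 1 ∧ φ A ∉ Rvec y
  · obtain ⟨A₀, hA₀r, hA₀b⟩ := hbad
    obtain ⟨u₀, v₀, a₀, z₀, hA₀, hu₀, hv₀, hvd₀, huw₀, hφ₀, ha₀, hz₀, hzy₀⟩ :=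
      extract A₀ hA₀r hA₀b
    refine ⟨a₀, ha₀, y, hy, fun M hM => ?_⟩
    obtain ⟨c, s, hMd⟩ := exists_decomp_of_le_one hM
    by_cases hM0 : c = 0 ∨ s = 0
    · left
      have hMz : M = 0 := by
        ext i j
        rcases hM0 with h' | h'
        · rw [hMd i j, congrFun h' i, Matrix.zero_apply]; simp
        · rw [hMd i j, congrFun h' j, Matrix.zero_apply]; simp
      rw [hMz, h0]
      exact ⟨0, fun i j => by simp⟩
    · push_neg at hM0
      have hMr : rowRank M = 1 := rowRank_outer hM0.1 hM0.2 hMd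
      by_cases hgood : φ M ∈ Rvec y
      · exact Or.inl hgood
      · obtain ⟨u, v, a, z, hA, hu, hv2, hvd, huw, hφM, ha, hz, hzy⟩ :=
          extract M hMr hgood
        obtain ⟨t, ht⟩ := core A₀ M u₀ v₀ a₀ z₀ u v a z hA₀ hu₀ hv₀ hvd₀ huw₀ hφ₀ ha₀ hzy₀
          hA hu hv2 hvd huw hφM ha hzy
        right
        refine ⟨fun j => t * z j, fun i j => ?_⟩
        rw [hφM i j, ht i, mul_assoc]
  · push_neg at hbad
    refine ⟨fun _ => 1, ?_, y, hy, fun M hM => ?_⟩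
    · intro h'
      exact one_ne_zero (congrFun h' ⟨0, hp⟩)
    · obtain ⟨c, s, hMd⟩ := exists_decomp_of_le_one hM
      by_cases hM0 : c = 0 ∨ s = 0
      · left
        have hMz : M = 0 := by
          ext i j
          rcases hM0 with h' | h'
          · rw [hMd i j, congrFun h' i, Matrix.zero_apply]; simp
          · rw [hMd i j, congrFun h' j, Matrix.zero_apply]; simp
        rw [hMz, h0]
        exact ⟨0, fun i j => by simp⟩
      · push_neg at hM0
        exact Or.inl (hbad M (rowRank_outer hM0.1 hM0.2 hMd))

lemma caseL {m n p q : ℕ} (φ : Matrix (Fin m) (Fin n) D → Matrix (Fin p) (Fin q) D)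
    (hφ : ∀ A B, Adjacent A B → Adjacent (φ A) (φ B)) (h0 : φ 0 = 0)
    (d : Submodule D (Fin n → D)) (e : Submodule Dᵐᵒᵖ (Fin m → D))
    (x₀ : Fin n → D) (hx₀0 : x₀ ≠ 0) (hx₀d : x₀ ∈ d)
    (w : Fin m → D) (hw0 : w ≠ 0) (hwe : w ∈ e)
    (x : Fin p → D) (hx : x ≠ 0) (hq : 0 < q)
    (hRd : ∀ M, M ∈ Rsub d → φ M ∈ Lvec x)
    (hLe : ∀ M, M ∈ Lsub e → φ M ∈ Lvec x) :
    DegZero φ := by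
  classical
  have himg : ∀ A : Matrix (Fin m) (Fin n) D, rowRank A = 1 → rowRank (φ A) = 1 := by
    intro A hA
    have h1 : Adjacent A 0 := by unfold Adjacent; rwa [sub_zero]
    have h2 := hφ A 0 h1
    unfold Adjacent at h2
    rwa [h0, sub_zero] at h2
  have memR : ∀ (A : Matrix (Fin m) (Fin n) D) (u : Fin m → D) (v : Fin n → D), v ∈ d →
      (∀ i j, A i j = u i * v j) → A ∈ Rsub d := by
    intro A u v hv hA
    simp only [Rsub, Set.mem_setOf_eq]
    intro i
    have hAi : A i = u i • v := funext fun j => hA i j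
    rw [hAi]
    exact d.smul_mem _ hv
  have memL : ∀ (A : Matrix (Fin m) (Fin n) D) (u : Fin m → D) (v : Fin n → D) (c : D),
      (u = fun i => w i * c) → (∀ i j, A i j = u i * v j) → A ∈ Lsub e := by
    intro A u v c hc hA
    simp only [Lsub, Set.mem_setOf_eq]
    intro j
    have hcol : (fun i => A i j) = (MulOpposite.op (c * v j)) • w := by
      funext i
      rw [hA i j, hc]
      simp only [Pi.smul_apply, MulOpposite.smul_eq_mul_unop, MulOpposite.unop_op]
      rw [mul_assoc]
    rw [hcol]
    exact e.smul_mem _ hwe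
  have extract : ∀ A : Matrix (Fin m) (Fin n) D, rowRank A = 1 → φ A ∉ Lvec x →
      ∃ (u : Fin m → D) (v : Fin n → D) (a : Fin p → D) (z : Fin q → D),
        (∀ i j, A i j = u i * v j) ∧ u ≠ 0 ∧ v ≠ 0 ∧ v ∉ d ∧
        (∀ c : D, u ≠ fun i => w i * c) ∧
        (∀ i j, φ A i j = a i * z j) ∧ a ≠ 0 ∧ z ≠ 0 ∧ (∀ c : D, a ≠ fun i => x i * c) := by
    intro A hA hbad
    obtain ⟨u, v, hu, hv, hAd⟩ := exists_decomp_of_eq_one hA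
    obtain ⟨a, z, ha, hz, hφAd⟩ := exists_decomp_of_eq_one (himg A hA)
    refine ⟨u, v, a, z, hAd, hu, hv, ?_, ?_, hφAd, ha, hz, ?_⟩
    · intro hvd
      exact hbad (hRd A (memR A u v hvd hAd))
    · intro c hc
      exact hbad (hLe A (memL A u v c hc hAd))
    · intro c hc
      apply hbad
      refine ⟨fun j => c * z j, fun i j => ?_⟩
      rw [hφAd i j, congrFun hc i, mul_assoc]
  have gooddec : ∀ G : Matrix (Fin m) (Fin n) D, rowRank G = 1 → φ G ∈ Lvec x →
      ∃ g : Fin q → D, g ≠ 0 ∧ ∀ i j, φ G i j = x i * g j := by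
    intro G hG hgood
    obtain ⟨g, hg⟩ := hgood
    exact ⟨g, (decomp_nonzero hg (himg G hG)).2, hg⟩
  have link : ∀ (A G : Matrix (Fin m) (Fin n) D) (a : Fin p → D) (z : Fin q → D)
      (g : Fin q → D),
      (∀ i j, φ A i j = a i * z j) → z ≠ 0 → (∀ c : D, a ≠ fun i => x i * c) →
      (∀ i j, φ G i j = x i * g j) → g ≠ 0 → Adjacent A G →
      ∃ t, t ≠ 0 ∧ ∀ j, g j = t * z j := by
    intro A G a z g hφA hz hax hφG hg hadj
    have hr : rowRank (φ A - φ G) ≤ 1 := le_of_eq (hφ A G hadj)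
    have hM : ∀ i j, (φ A - φ G) i j = a i * z j + x i * (fun j => -(g j)) j := by
      intro i j
      rw [Matrix.sub_apply, hφA i j, hφG i j]
      simp [mul_neg, sub_eq_add_neg]
    obtain ⟨t, ht⟩ := coeff_left hM hz hx hax hr
    have hgt : ∀ j, g j = (-t) * z j := by
      intro j
      have h1 := ht j
      rw [neg_mul, ← h1, neg_neg]
    refine ⟨-t, ?_, hgt⟩
    intro h0t
    apply hg
    funext j
    rw [Pi.zero_apply, hgt j, h0t, zero_mul]
  have viaGood : ∀ (A₁ A₂ G : Matrix (Fin m) (Fin n) D) (a₁ : Fin p → D) (z₁ : Fin q → D)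
      (a₂ : Fin p → D) (z₂ : Fin q → D),
      (∀ i j, φ A₁ i j = a₁ i * z₁ j) → z₁ ≠ 0 → (∀ c : D, a₁ ≠ fun i => x i * c) →
      (∀ i j, φ A₂ i j = a₂ i * z₂ j) → z₂ ≠ 0 → (∀ c : D, a₂ ≠ fun i => x i * c) →
      rowRank G = 1 → φ G ∈ Lvec x → Adjacent A₁ G → Adjacent A₂ G →
      ∃ t, ∀ j, z₂ j = t * z₁ j := by
    intro A₁ A₂ G a₁ z₁ a₂ z₂ hφ₁ hz₁ ha₁ hφ₂ hz₂ ha₂ hG1 hGg adj₁ adj₂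
    obtain ⟨g, hg, hφG⟩ := gooddec G hG1 hGg
    obtain ⟨t₁, ht₁0, ht₁⟩ := link A₁ G a₁ z₁ g hφ₁ hz₁ ha₁ hφG hg adj₁
    obtain ⟨t₂, ht₂0, ht₂⟩ := link A₂ G a₂ z₂ g hφ₂ hz₂ ha₂ hφG hg adj₂
    refine ⟨t₂⁻¹ * t₁, fun j => ?_⟩
    have h1 : z₂ j = t₂⁻¹ * g j := by
      rw [ht₂ j, ← mul_assoc, inv_mul_cancel₀ ht₂0, one_mul]
    rw [h1, ht₁ j, ← mul_assoc]
  have core : ∀ (A₁ A₂ : Matrix (Fin m) (Fin n) D)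
      (u₁ : Fin m → D) (v₁ : Fin n → D) (a₁ : Fin p → D) (z₁ : Fin q → D)
      (u₂ : Fin m → D) (v₂ : Fin n → D) (a₂ : Fin p → D) (z₂ : Fin q → D),
      (∀ i j, A₁ i j = u₁ i * v₁ j) → u₁ ≠ 0 → v₁ ≠ 0 → v₁ ∉ d →
      (∀ c : D, u₁ ≠ fun i => w i * c) →
      (∀ i j, φ A₁ i j = a₁ i * z₁ j) → z₁ ≠ 0 → (∀ c : D, a₁ ≠ fun i => x i * c) →
      (∀ i j, A₂ i j = u₂ i * v₂ j) → u₂ ≠ 0 → v₂ ≠ 0 → v₂ ∉ d →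
      (∀ c : D, u₂ ≠ fun i => w i * c) →
      (∀ i j, φ A₂ i j = a₂ i * z₂ j) → z₂ ≠ 0 → (∀ c : D, a₂ ≠ fun i => x i * c) →
      ∃ t, ∀ j, z₂ j = t * z₁ j := by
    intro A₁ A₂ u₁ v₁ a₁ z₁ u₂ v₂ a₂ z₂ hA₁ hu₁ hv₁ hvd₁ huw₁ hφ₁ hz₁ hax₁
      hA₂ hu₂ hv₂ hvd₂ huw₂ hφ₂ hz₂ hax₂
    have hwv : ∀ (u' : Fin m → D), u' ≠ 0 → (∀ c : D, u' ≠ fun i => w i * c) →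
        (fun i => u' i - w i) ≠ 0 := by
      intro u' _ hu'w
      apply sub_fun_ne_zero
      intro h'
      exact hu'w 1 (by rw [h']; funext i; rw [mul_one])
    have hvx : ∀ (v' : Fin n → D), v' ∉ d → (fun j => v' j - x₀ j) ≠ 0 := by
      intro v' hv'd
      apply sub_fun_ne_zero
      intro h'
      rw [h'] at hv'd
      exact hv'd hx₀d
    by_cases hv : v₁ = v₂
    · set G : Matrix (Fin m) (Fin n) D := Matrix.of fun i j => w i * v₁ j with hGdef
      have hGe : ∀ i j, G i j = w i * v₁ j := fun i j => rfl
      have hG1 : rowRank G = 1 := rowRank_outer hw0 hv₁ hGe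
      have hGg : φ G ∈ Lvec x :=
        hLe G (memL G w v₁ 1 (funext fun i => (mul_one _).symm) hGe)
      have adj₁ : Adjacent A₁ G := by
        refine adjHelper (hwv u₁ hu₁ huw₁) hv₁ (fun i j => ?_)
        rw [hA₁ i j, hGe i j, sub_mul]
      have adj₂ : Adjacent A₂ G := by
        refine adjHelper (hwv u₂ hu₂ huw₂) hv₂ (fun i j => ?_)
        rw [hA₂ i j, hGe i j, hv, sub_mul]
      exact viaGood A₁ A₂ G a₁ z₁ a₂ z₂ hφ₁ hz₁ hax₁ hφ₂ hz₂ hax₂ hG1 hGg adj₁ adj₂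
    · by_cases hu : u₁ = u₂
      · set G : Matrix (Fin m) (Fin n) D := Matrix.of fun i j => u₁ i * x₀ j with hGdef
        have hGe : ∀ i j, G i j = u₁ i * x₀ j := fun i j => rfl
        have hG1 : rowRank G = 1 := rowRank_outer hu₁ hx₀0 hGe
        have hGg : φ G ∈ Lvec x := hRd G (memR G u₁ x₀ hx₀d hGe)
        have adj₁ : Adjacent A₁ G := by
          refine adjHelper hu₁ (hvx v₁ hvd₁) (fun i j => ?_)
          rw [hA₁ i j, hGe i j, mul_sub]
        have adj₂ : Adjacent A₂ G := by
          refine adjHelper hu₂ (hvx v₂ hvd₂) (fun i j => ?_)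
          rw [hA₂ i j, hGe i j, ← hu, mul_sub]
        exact viaGood A₁ A₂ G a₁ z₁ a₂ z₂ hφ₁ hz₁ hax₁ hφ₂ hz₂ hax₂ hG1 hGg adj₁ adj₂
      · set A₃ : Matrix (Fin m) (Fin n) D := Matrix.of fun i j => u₁ i * v₂ j with hA₃def
        have hA₃e : ∀ i j, A₃ i j = u₁ i * v₂ j := fun i j => rfl
        have hA₃r : rowRank A₃ = 1 := rowRank_outer hu₁ hv₂ hA₃e
        have adj₁₃ : Adjacent A₁ A₃ := by
          refine adjHelper hu₁ (sub_fun_ne_zero hv) (fun i j => ?_)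
          rw [hA₁ i j, hA₃e i j, mul_sub]
        have adj₂₃ : Adjacent A₂ A₃ := by
          refine adjHelper (sub_fun_ne_zero (Ne.symm hu)) hv₂ (fun i j => ?_)
          rw [hA₂ i j, hA₃e i j, sub_mul]
        by_cases h3 : φ A₃ ∈ Lvec x
        · exact viaGood A₁ A₂ A₃ a₁ z₁ a₂ z₂ hφ₁ hz₁ hax₁ hφ₂ hz₂ hax₂ hA₃r h3 adj₁₃ adj₂₃
        · obtain ⟨a₃, z₃, ha₃, hz₃, hφ₃⟩ := exists_decomp_of_eq_one (himg A₃ hA₃r)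
          have hax₃ : ∀ c : D, a₃ ≠ fun i => x i * c := by
            intro c hc
            apply h3
            refine ⟨fun j => c * z₃ j, fun i j => ?_⟩
            rw [hφ₃ i j, congrFun hc i, mul_assoc]
          set B₁ : Matrix (Fin m) (Fin n) D := Matrix.of fun i j => u₁ i * x₀ j with hB₁def
          have hB₁e : ∀ i j, B₁ i j = u₁ i * x₀ j := fun i j => rfl
          have hB₁r : rowRank B₁ = 1 := rowRank_outer hu₁ hx₀0 hB₁e
          have hB₁g : φ B₁ ∈ Lvec x := hRd B₁ (memR B₁ u₁ x₀ hx₀d hB₁e)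
          have adjB₁ : Adjacent A₁ B₁ := by
            refine adjHelper hu₁ (hvx v₁ hvd₁) (fun i j => ?_)
            rw [hA₁ i j, hB₁e i j, mul_sub]
          have adjB₃ : Adjacent A₃ B₁ := by
            refine adjHelper hu₁ (hvx v₂ hvd₂) (fun i j => ?_)
            rw [hA₃e i j, hB₁e i j, mul_sub]
          obtain ⟨t₁, ht₁⟩ := viaGood A₁ A₃ B₁ a₁ z₁ a₃ z₃ hφ₁ hz₁ hax₁ hφ₃ hz₃ hax₃
            hB₁r hB₁g adjB₁ adjB₃
          set C₂ : Matrix (Fin m) (Fin n) D := Matrix.of fun i j => w i * v₂ j with hC₂def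
          have hC₂e : ∀ i j, C₂ i j = w i * v₂ j := fun i j => rfl
          have hC₂r : rowRank C₂ = 1 := rowRank_outer hw0 hv₂ hC₂e
          have hC₂g : φ C₂ ∈ Lvec x :=
            hLe C₂ (memL C₂ w v₂ 1 (funext fun i => (mul_one _).symm) hC₂e)
          have adjC₃ : Adjacent A₃ C₂ := by
            refine adjHelper (hwv u₁ hu₁ huw₁) hv₂ (fun i j => ?_)
            rw [hA₃e i j, hC₂e i j, sub_mul]
          have adjC₂ : Adjacent A₂ C₂ := by
            refine adjHelper (hwv u₂ hu₂ huw₂) hv₂ (fun i j => ?_)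
            rw [hA₂ i j, hC₂e i j, sub_mul]
          obtain ⟨t₂, ht₂⟩ := viaGood A₃ A₂ C₂ a₃ z₃ a₂ z₂ hφ₃ hz₃ hax₃ hφ₂ hz₂ hax₂
            hC₂r hC₂g adjC₃ adjC₂
          refine ⟨t₂ * t₁, fun j => ?_⟩
          rw [ht₂ j, ht₁ j, ← mul_assoc]
  by_cases hbad : ∃ A : Matrix (Fin m) (Fin n) D, rowRank A = 1 ∧ φ A ∉ Lvec x
  · obtain ⟨A₀, hA₀r, hA₀b⟩ := hbad
    obtain ⟨u₀, v₀, a₀, z₀, hA₀, hu₀, hv₀, hvd₀, huw₀, hφ₀, ha₀, hz₀, hax₀⟩ :=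
      extract A₀ hA₀r hA₀b
    refine ⟨x, hx, z₀, hz₀, fun M hM => ?_⟩
    obtain ⟨c, s, hMd⟩ := exists_decomp_of_le_one hM
    by_cases hM0 : c = 0 ∨ s = 0
    · right
      have hMz : M = 0 := by
        ext i j
        rcases hM0 with h' | h'
        · rw [hMd i j, congrFun h' i, Matrix.zero_apply]; simp
        · rw [hMd i j, congrFun h' j, Matrix.zero_apply]; simp
      rw [hMz, h0]
      exact ⟨0, fun i j => by simp⟩
    · push_neg at hM0
      have hMr : rowRank M = 1 := rowRank_outer hM0.1 hM0.2 hMd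
      by_cases hgood : φ M ∈ Lvec x
      · exact Or.inr hgood
      · obtain ⟨u, v, a, z, hA, hu, hv2, hvd, huw, hφM, ha, hz, hax⟩ :=
          extract M hMr hgood
        obtain ⟨t, ht⟩ := core A₀ M u₀ v₀ a₀ z₀ u v a z hA₀ hu₀ hv₀ hvd₀ huw₀ hφ₀ hz₀ hax₀
          hA hu hv2 hvd huw hφM hz hax
        left
        refine ⟨fun i => a i * t, fun i j => ?_⟩
        rw [hφM i j, ht j, ← mul_assoc]
  · push_neg at hbad
    refine ⟨x, hx, fun _ => 1, ?_, fun M hM => ?_⟩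
    · intro h'
      exact one_ne_zero (congrFun h' ⟨0, hq⟩)
    · obtain ⟨c, s, hMd⟩ := exists_decomp_of_le_one hM
      by_cases hM0 : c = 0 ∨ s = 0
      · right
        have hMz : M = 0 := by
          ext i j
          rcases hM0 with h' | h'
          · rw [hMd i j, congrFun h' i, Matrix.zero_apply]; simp
          · rw [hMd i j, congrFun h' j, Matrix.zero_apply]; simp
        rw [hMz, h0]
        exact ⟨0, fun i j => by simp⟩
      · push_neg at hM0
        exact Or.inr (hbad M (rowRank_outer hM0.1 hM0.2 hMd))

end Stmt7Aux


/-- Lemma 3.9. If `φ(R_d)` and `φ(L_e)` are both contained in one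
common `R_{d'}`, or both in one common `L_{e'}`, then `φ` is degenerate with respect
to `0`. -/
theorem stmt7 (m n p q : ℕ) (hm : 0 < m) (hn : 0 < n) (hp : 0 < p) (hq : 0 < q)
    (φ : Matrix (Fin m) (Fin n) D → Matrix (Fin p) (Fin q) D)
    (hφ : ∀ A B, Adjacent A B → Adjacent (φ A) (φ B)) (h0 : φ 0 = 0)
    (d : Submodule D (Fin n → D)) (hd : Module.finrank D d = 1)
    (e : Submodule Dᵐᵒᵖ (Fin m → D)) (he : Module.finrank Dᵐᵒᵖ e = 1)
    (h : (∃ d' : Submodule D (Fin q → D), Module.finrank D d' = 1 ∧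
            (∀ M : Matrix (Fin m) (Fin n) D, M ∈ Rsub d → φ M ∈ Rsub d') ∧
            (∀ M : Matrix (Fin m) (Fin n) D, M ∈ Lsub e → φ M ∈ Rsub d')) ∨
         (∃ e' : Submodule Dᵐᵒᵖ (Fin p → D), Module.finrank Dᵐᵒᵖ e' = 1 ∧
            (∀ M : Matrix (Fin m) (Fin n) D, M ∈ Rsub d → φ M ∈ Lsub e') ∧
            (∀ M : Matrix (Fin m) (Fin n) D, M ∈ Lsub e → φ M ∈ Lsub e'))) :
    DegZero φ := by
    classical
  obtain ⟨x₀, hx₀0, hx₀d, -⟩ := gen_of_finrank_one d hd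
  obtain ⟨w, hw0, hwe, -⟩ := gen_of_finrank_one e he
  rcases h with ⟨d', hd', hRd', hLe'⟩ | ⟨e', he', hRd', hLe'⟩
  · obtain ⟨y, hy0, hyd', hy⟩ := gen_of_finrank_one d' hd'
    have conv : ∀ N : Matrix (Fin p) (Fin q) D, N ∈ Rsub d' → N ∈ Rvec y := by
      intro N hN
      choose c hc using fun i => hy (N i) (hN i)
      exact ⟨c, fun i j => by rw [congrFun (hc i) j]; rfl⟩
    exact caseR φ hφ h0 d e x₀ hx₀0 hx₀d w hw0 hwe y hy0 hp
      (fun M hM => conv _ (hRd' M hM)) (fun M hM => conv _ (hLe' M hM))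
  · obtain ⟨x, hx0, hxe', hx⟩ := gen_of_finrank_one e' he'
    have conv : ∀ N : Matrix (Fin p) (Fin q) D, N ∈ Lsub e' → N ∈ Lvec x := by
      intro N hN
      choose c hc using fun j => hx (fun i => N i j) (hN j)
      refine ⟨fun j => (c j).unop, fun i j => ?_⟩
      have := congrFun (hc j) i
      simpa [MulOpposite.smul_eq_mul_unop] using this
    exact caseL φ hφ h0 d e x₀ hx₀0 hx₀d w hw0 hwe x hx0 hq
      (fun M hM => conv _ (hRd' M hM)) (fun M hM => conv _ (hLe' M hM))
end
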